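/- If a partial coloring of an n×n square uniquely extends to L(n, 2n-2), then no row and no column contains three or more uncolored entries. -/
import Mathlib


/-- An `L(n,k)`: an `n × n` array colored with `k` colors such that all entries
in any row and any column have distinct colors. -/
def IsLatin (n k : ℕ) (L : Fin n → Fin n → Fin k) : Prop :=
  (∀ i : Fin n, Function.Injective (L i)) ∧
  (∀ j : Fin n, Function.Injective (fun i => L i j))

/-- `L` extends the partial coloring `P`. -/
def ExtendsPC {n k : ℕ} (P : Fin n → Fin n → Option (Fin k))
    (L : Fin n → Fin n → Fin k) : Prop :=
  ∀ i j c, P i j = some c → L i j = c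

/-- The partial coloring `P` uniquely extends to an `L(n,k)`. -/
def UniquelyExtends (n k : ℕ) (P : Fin n → Fin n → Option (Fin k)) : Prop :=
  ∃! L : Fin n → Fin n → Fin k, IsLatin n k L ∧ ExtendsPC P L

/-- Number of uncolored entries of a partial coloring. -/
def numUncolored {n k : ℕ} (P : Fin n → Fin n → Option (Fin k)) : ℕ :=
  (Finset.univ.filter (fun p : Fin n × Fin n => P p.1 p.2 = none)).card

/-- Number of colored entries of a partial coloring. -/
def numColored {n k : ℕ} (P : Fin n → Fin n → Option (Fin k)) : ℕ :=
  (Finset.univ.filter (fun p : Fin n × Fin n => P p.1 p.2 ≠ none)).card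

/-- The defining number `d(L(n,k))`. -/
noncomputable def definingNumber (n k : ℕ) : ℕ :=
  sInf {m | ∃ P : Fin n → Fin n → Option (Fin k),
    UniquelyExtends n k P ∧ numColored P = m}

/-- The set of available colors for entry `(i,j)`: colors not appearing among
the colored entries of row `i` or column `j`. -/
def availColors {n k : ℕ} (P : Fin n → Fin n → Option (Fin k)) (i j : Fin n) :
    Finset (Fin k) :=
  Finset.univ.filter (fun c => (∀ w, P i w ≠ some c) ∧ (∀ h, P h j ≠ some c))

lemma rowBound (n : ℕ) (P : Fin n → Fin n → Option (Fin (2*n-2)))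
    (h : UniquelyExtends n (2*n-2) P) (i : Fin n) :
    (Finset.univ.filter (fun j : Fin n => P i j = none)).card ≤ 2 := by
  by_contra hcon
  push_neg at hcon
  obtain ⟨L, ⟨hLat, hExt⟩, huniq⟩ := h
  set S : Finset (Fin n) := Finset.univ.filter (fun j => P i j = none) with hSdef
  have hS3 : 3 ≤ S.card := hcon
  have hSn : S.card ≤ n := by
    simpa using Finset.card_le_card (Finset.subset_univ S)
  have hn3 : 3 ≤ n := le_trans hS3 hSn
  set A : Fin n → Finset (Fin (2*n-2)) := fun j =>
    Finset.univ.filter (fun c =>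
      (∀ h' : Fin n, h' ≠ i → L h' j ≠ c) ∧ (∀ w, w ∉ S → L i w ≠ c)) with hAdef
  have hAmem : ∀ j c, c ∈ A j ↔
      (∀ h' : Fin n, h' ≠ i → L h' j ≠ c) ∧ (∀ w, w ∉ S → L i w ≠ c) := by
    intro j c; simp [hAdef]
  -- lower bound on |A j|
  have hAcard : ∀ j, S.card - 1 ≤ (A j).card := by
    intro j
    have hsub : Finset.univ \ A j ⊆
        ((Finset.univ.erase i).image (fun h' => L h' j)) ∪
        ((Finset.univ \ S).image (L i)) := by
      intro c hc
      simp only [Finset.mem_sdiff, Finset.mem_univ, true_and] at hc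
      rw [hAmem, not_and_or] at hc
      rcases hc with hc | hc
      · push_neg at hc
        obtain ⟨h', hh', he⟩ := hc
        exact Finset.mem_union_left _
          (Finset.mem_image.mpr ⟨h', Finset.mem_erase.mpr ⟨hh', Finset.mem_univ _⟩, he⟩)
      · push_neg at hc
        obtain ⟨w, hw, he⟩ := hc
        exact Finset.mem_union_right _
          (Finset.mem_image.mpr ⟨w, Finset.mem_sdiff.mpr ⟨Finset.mem_univ _, hw⟩, he⟩)
    have h1 : (Finset.univ \ A j).card ≤ (n - 1) + (n - S.card) := by
      refine le_trans (Finset.card_le_card hsub) (le_trans (Finset.card_union_le _ _) ?_)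
      refine add_le_add (le_trans Finset.card_image_le ?_) (le_trans Finset.card_image_le ?_)
      · rw [Finset.card_erase_of_mem (Finset.mem_univ i)]; simp
      · rw [Finset.card_sdiff_of_subset (Finset.subset_univ S)]; simp
    have h2 : (Finset.univ \ A j).card = (2*n-2) - (A j).card := by
      rw [Finset.card_sdiff_of_subset (Finset.subset_univ _)]
      simp
    have h3 : (A j).card ≤ 2*n-2 := by
      simpa using Finset.card_le_card (Finset.subset_univ (A j))
    omega
  -- the colors used by L on row i at positions of S
  set C : Finset (Fin (2*n-2)) := S.image (L i) with hCdef
  have hCcard : C.card = S.card := Finset.card_image_of_injective _ (hLat.1 i)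
  have hself : ∀ j, j ∈ S → L i j ∈ A j := by
    intro j hj
    rw [hAmem]
    constructor
    · intro h' hh' he; exact hh' (hLat.2 j he)
    · intro w hw he; exact hw ((hLat.1 i he) ▸ hj)
  have hmiss : ∀ j, A j ⊆ C → ∀ c c' : Fin (2*n-2), c ∈ C → c' ∈ C → c ≠ c' →
      c ∉ A j → c' ∈ A j := by
    intro j hsub c c' hc hc' hne hcA
    have h1 : A j ⊆ C.erase c := by
      intro x hx
      exact Finset.mem_erase.mpr ⟨fun hxc => hcA (hxc ▸ hx), hsub hx⟩
    have h2 : (C.erase c).card ≤ (A j).card := by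
      rw [Finset.card_erase_of_mem hc, hCcard]
      exact hAcard j
    have h3 : A j = C.erase c := Finset.eq_of_subset_of_card_le h1 h2
    rw [h3]
    exact Finset.mem_erase.mpr ⟨hne.symm, hc'⟩
  -- key: any valid replacement of row i must equal L i
  have key : ∀ g : Fin n → Fin (2*n-2), Function.Injective g →
      (∀ j (h' : Fin n), h' ≠ i → g j ≠ L h' j) →
      (∀ j, j ∉ S → g j = L i j) → g = L i := by
    intro g hg hcg hfg
    set L' : Fin n → Fin n → Fin (2*n-2) := fun i' => if i' = i then g else L i' with hL'
    have hLat' : IsLatin n (2*n-2) L' := by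
      constructor
      · intro i'
        by_cases hi : i' = i
        · simpa [hL', hi] using hg
        · simpa [hL', hi] using hLat.1 i'
      · intro j a b hab
        simp only [hL'] at hab
        by_cases ha : a = i <;> by_cases hb : b = i
        · rw [ha, hb]
        · rw [if_pos ha, if_neg hb] at hab
          exact absurd hab (hcg j b hb)
        · rw [if_neg ha, if_pos hb] at hab
          exact absurd hab.symm (hcg j a ha)
        · rw [if_neg ha, if_neg hb] at hab
          exact hLat.2 j hab
    have hExt' : ExtendsPC P L' := by
      intro a b c hP
      by_cases ha : a = i
      · subst ha
        simp only [hL', if_pos rfl]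
        have hb : b ∉ S := by simp [hSdef, hP]
        rw [hfg b hb]
        exact hExt _ _ _ hP
      · simp only [hL', if_neg ha]
        exact hExt _ _ _ hP
    have heq := huniq L' ⟨hLat', hExt'⟩
    funext j
    have h2 := congrFun (congrFun heq i) j
    simpa [hL'] using h2
  -- permutation version
  have keyP : ∀ e : Equiv.Perm (Fin n),
      (∀ w (h' : Fin n), h' ≠ i → L i (e w) ≠ L h' w) →
      (∀ w, w ∉ S → e w = w) → ∀ w0, e w0 ≠ w0 → False := by
    intro e hce hfe w0 hw0
    have hgeq := key (fun w => L i (e w)) ((hLat.1 i).comp e.injective) hce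
      (fun j hj => congrArg (L i) (hfe j hj))
    have h2 := congrFun hgeq w0
    exact hw0 (hLat.1 i h2)
  -- case 1: some available color outside C
  have case1 : ∀ j, j ∈ S → ∀ c, c ∈ A j → c ∉ C → False := by
    intro j hj c hcA hcC
    obtain ⟨hc1, hc2⟩ := (hAmem j c).mp hcA
    have hinj : Function.Injective (Function.update (L i) j c) := by
      intro a b hab
      rw [Function.update_apply, Function.update_apply] at hab
      split_ifs at hab with h1 h2 h2
      · rw [h1, h2]
      · exfalso
        by_cases hb : b ∈ S
        · exact hcC (hab ▸ Finset.mem_image_of_mem (L i) hb)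
        · exact hc2 b hb hab.symm
      · exfalso
        by_cases ha : a ∈ S
        · exact hcC (hab ▸ Finset.mem_image_of_mem (L i) ha)
        · exact hc2 a ha hab
      · exact hLat.1 i hab
    have hcol : ∀ w (h' : Fin n), h' ≠ i → Function.update (L i) j c w ≠ L h' w := by
      intro w h' hh'
      rw [Function.update_apply]
      split_ifs with hw
      · subst hw; exact fun he => hc1 h' hh' he.symm
      · exact fun he => hh' (hLat.2 w he.symm)
    have hfix : ∀ w, w ∉ S → Function.update (L i) j c w = L i w := by
      intro w hw
      rw [Function.update_apply, if_neg (by rintro rfl; exact hw hj)]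
    have hgeq := key _ hinj hcol hfix
    have h2 := congrFun hgeq j
    rw [Function.update_self] at h2
    exact hcC (h2 ▸ Finset.mem_image_of_mem (L i) hj)
  -- swap case
  have swapCase : ∀ a b, a ∈ S → b ∈ S → a ≠ b → L i b ∈ A a → L i a ∈ A b → False := by
    intro a b ha hb hab hmab hmba
    refine keyP (Equiv.swap a b) ?_ ?_ a ?_
    · intro w h' hh'
      rcases eq_or_ne w a with rfl | hwa
      · rw [Equiv.swap_apply_left]
        exact fun he => ((hAmem w (L i b)).mp hmab).1 h' hh' he.symm
      rcases eq_or_ne w b with rfl | hwb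
      · rw [Equiv.swap_apply_right]
        exact fun he => ((hAmem w (L i a)).mp hmba).1 h' hh' he.symm
      · rw [Equiv.swap_apply_of_ne_of_ne hwa hwb]
        exact fun he => hh' (hLat.2 w he.symm)
    · intro w hw
      exact Equiv.swap_apply_of_ne_of_ne (fun hx => hw (hx ▸ ha)) (fun hx => hw (hx ▸ hb))
    · rw [Equiv.swap_apply_left]; exact hab.symm
  -- 3-cycle case: a ↦ b ↦ c ↦ a  (row value at a becomes L i b, etc.)
  have cycleCase : ∀ a b c, a ∈ S → b ∈ S → c ∈ S → a ≠ b → a ≠ c → b ≠ c →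
      L i b ∈ A a → L i c ∈ A b → L i a ∈ A c → False := by
    intro a b c ha hb hc hab hac hbc h1 h2 h3
    set e : Equiv.Perm (Fin n) := (Equiv.swap a b).trans (Equiv.swap a c) with he
    have hea : e a = b := by
      simp only [he, Equiv.trans_apply, Equiv.swap_apply_left]
      exact Equiv.swap_apply_of_ne_of_ne hab.symm hbc
    have heb : e b = c := by
      simp only [he, Equiv.trans_apply, Equiv.swap_apply_right, Equiv.swap_apply_left]
    have hec : e c = a := by
      simp only [he, Equiv.trans_apply]
      rw [Equiv.swap_apply_of_ne_of_ne hac.symm hbc.symm, Equiv.swap_apply_right]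
    have heo : ∀ w, w ≠ a → w ≠ b → w ≠ c → e w = w := by
      intro w hwa hwb hwc
      simp only [he, Equiv.trans_apply]
      rw [Equiv.swap_apply_of_ne_of_ne hwa hwb, Equiv.swap_apply_of_ne_of_ne hwa hwc]
    refine keyP e ?_ ?_ a (by rw [hea]; exact hab.symm)
    · intro w h' hh'
      rcases eq_or_ne w a with rfl | hwa
      · rw [hea]; exact fun het => ((hAmem w (L i b)).mp h1).1 h' hh' het.symm
      rcases eq_or_ne w b with rfl | hwb
      · rw [heb]; exact fun het => ((hAmem w (L i c)).mp h2).1 h' hh' het.symm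
      rcases eq_or_ne w c with rfl | hwc
      · rw [hec]; exact fun het => ((hAmem w (L i a)).mp h3).1 h' hh' het.symm
      · rw [heo w hwa hwb hwc]
        exact fun het => hh' (hLat.2 w het.symm)
    · intro w hw
      exact heo w (fun hx => hw (hx ▸ ha)) (fun hx => hw (hx ▸ hb)) (fun hx => hw (hx ▸ hc))
  -- pick three uncolored cells
  obtain ⟨T, hTS, hT3⟩ := Finset.exists_subset_card_eq hS3
  obtain ⟨j1, j2, j3, h12, h13, h23, hTeq⟩ := Finset.card_eq_three.mp hT3
  have hj1 : j1 ∈ S := hTS (by rw [hTeq]; simp)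
  have hj2 : j2 ∈ S := hTS (by rw [hTeq]; simp)
  have hj3 : j3 ∈ S := hTS (by rw [hTeq]; simp)
  have hc1C : L i j1 ∈ C := Finset.mem_image_of_mem (L i) hj1
  have hc2C : L i j2 ∈ C := Finset.mem_image_of_mem (L i) hj2
  have hc3C : L i j3 ∈ C := Finset.mem_image_of_mem (L i) hj3
  have hne12 : L i j1 ≠ L i j2 := fun he => h12 (hLat.1 i he)
  have hne13 : L i j1 ≠ L i j3 := fun he => h13 (hLat.1 i he)
  have hne23 : L i j2 ≠ L i j3 := fun he => h23 (hLat.1 i he)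
  -- reduce to A jX ⊆ C
  have hA1 : A j1 ⊆ C := by
    by_contra hns
    obtain ⟨c, hcA, hcC⟩ := Finset.not_subset.mp hns
    exact case1 j1 hj1 c hcA hcC
  have hA2 : A j2 ⊆ C := by
    by_contra hns
    obtain ⟨c, hcA, hcC⟩ := Finset.not_subset.mp hns
    exact case1 j2 hj2 c hcA hcC
  have hA3 : A j3 ⊆ C := by
    by_contra hns
    obtain ⟨c, hcA, hcC⟩ := Finset.not_subset.mp hns
    exact case1 j3 hj3 c hcA hcC
  -- final case analysis
  by_cases m12 : L i j2 ∈ A j1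
  · by_cases m21 : L i j1 ∈ A j2
    · exact swapCase j1 j2 hj1 hj2 h12 m12 m21
    · have m23 : L i j3 ∈ A j2 := hmiss j2 hA2 (L i j1) (L i j3) hc1C hc3C hne13 m21
      by_cases m32 : L i j2 ∈ A j3
      · exact swapCase j2 j3 hj2 hj3 h23 m23 m32
      · have m31 : L i j1 ∈ A j3 := hmiss j3 hA3 (L i j2) (L i j1) hc2C hc1C hne12.symm m32
        exact cycleCase j1 j2 j3 hj1 hj2 hj3 h12 h13 h23 m12 m23 m31
  · have m13 : L i j3 ∈ A j1 := hmiss j1 hA1 (L i j2) (L i j3) hc2C hc3C hne23 m12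
    by_cases m31 : L i j1 ∈ A j3
    · exact swapCase j1 j3 hj1 hj3 h13 m13 m31
    · have m32 : L i j2 ∈ A j3 := hmiss j3 hA3 (L i j1) (L i j2) hc1C hc2C hne12 m31
      by_cases m23 : L i j3 ∈ A j2
      · exact swapCase j2 j3 hj2 hj3 h23 m23 m32
      · have m21 : L i j1 ∈ A j2 := hmiss j2 hA2 (L i j3) (L i j1) hc3C hc1C hne13.symm m23
        exact cycleCase j1 j3 j2 hj1 hj3 hj2 h13 h12 h23.symm m13 m32 m21

theorem no_three_uncolored_in_line (n : ℕ)
    (P : Fin n → Fin n → Option (Fin (2*n-2)))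
    (h : UniquelyExtends n (2*n-2) P) :
    (∀ i : Fin n, (Finset.univ.filter (fun j : Fin n => P i j = none)).card ≤ 2) ∧
    (∀ j : Fin n, (Finset.univ.filter (fun i : Fin n => P i j = none)).card ≤ 2) := by
  constructor
  · exact fun i => rowBound n P h i
  · intro j
    have ht : UniquelyExtends n (2*n-2) (fun a b => P b a) := by
      obtain ⟨L, ⟨⟨hr, hc⟩, hE⟩, hu⟩ := h
      refine ⟨fun a b => L b a, ⟨⟨fun a => hc a, fun b => hr b⟩,
        fun a b c hP => hE b a c hP⟩, ?_⟩
      rintro L' ⟨⟨hr', hc'⟩, hE'⟩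
      have heq := hu (fun a b => L' b a) ⟨⟨fun a => hc' a, fun b => hr' b⟩,
        fun a b c hP => hE' b a c hP⟩
      funext a b
      exact congrFun (congrFun heq b) a
    exact rowBound n (fun a b => P b a) ht j
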